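/- Let S be a closed, totally disconnected subset of [0,∞) containing 0. Then for every q ∈ ℤ≥0 there exists a q-nebula A such that S ⊆ A and every compact connected component of A has nonempty intersection with S. -/
import Mathlib


open Set

/-- A closed subset `A` of `[0,∞)` is a `q`-nebula if it is a disjoint union of closed
intervals `I 0, …, I k` with `0 ∈ I 0`, the intervals `I 0, …, I (k-1)` compact of diameter
`< 2^{-q}`, and `I k` an unbounded closed interval contained in `(q, ∞)`. -/
def IsNebula (q : ℕ) (A : Set ℝ) : Prop :=
  IsClosed A ∧ A ⊆ Set.Ici 0 ∧
  ∃ (k : ℕ) (I : Fin (k + 1) → Set ℝ),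
    A = ⋃ i, I i ∧
    (0 : ℝ) ∈ I 0 ∧
    (∀ i : Fin (k + 1), (i : ℕ) < k →
      ∃ a b : ℝ, a ≤ b ∧ I i = Set.Icc a b ∧ b - a < (2 : ℝ) ^ (-(q : ℤ))) ∧
    (∃ a : ℝ, I (Fin.last k) = Set.Ici a ∧ (q : ℝ) < a) ∧
    Pairwise (Function.onFun Disjoint I)

/-- Lemma 2.13: every closed totally disconnected subset `S` of `[0,∞)` containing `0` is,
for each `q`, contained in a `q`-nebula each of whose compact connected components meets `S`. -/
theorem exists_nebula_containing
    (S : Set ℝ) (hSsub : S ⊆ Set.Ici 0) (hScl : IsClosed S)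
    (hStd : IsTotallyDisconnected S) (hS0 : (0 : ℝ) ∈ S) (q : ℕ) :
    ∃ A : Set ℝ, IsNebula q A ∧ S ⊆ A ∧
      ∀ x ∈ A, IsCompact (connectedComponentIn A x) →
        (connectedComponentIn A x ∩ S).Nonempty := by
  classical
  set δ : ℝ := (2 : ℝ) ^ (-(q : ℤ)) / 2 with hδdef
  have hδpos : 0 < δ := by positivity
  -- the complement of S is dense
  have hdense : ∀ u v : ℝ, u < v → ∃ t, u < t ∧ t < v ∧ t ∉ S := by
    intro u v huv
    by_contra h
    push_neg at h
    have hsub : Ioo u v ⊆ S := fun t ht => h t ht.1 ht.2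
    have hsing := hStd (Ioo u v) hsub isPreconnected_Ioo
    obtain ⟨t1, ht1, ht1'⟩ := exists_between huv
    obtain ⟨t2, ht2, ht2'⟩ := exists_between ht1'
    have : t1 = t2 := hsing ⟨ht1, ht1'⟩ ⟨ht1.trans ht2, ht2'⟩
    linarith
  -- cut points
  have hcutex : ∀ x : ℝ, ∃ c, x + δ / 2 < c ∧ c < x + δ ∧ c ∉ S :=
    fun x => hdense _ _ (by linarith)
  choose cut hcut1 hcut2 hcut3 using hcutex
  have hcutgt : ∀ x : ℝ, x < cut x := fun x => lt_trans (by linarith) (hcut1 x)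
  -- right endpoint of the interval starting at x
  set B : ℝ → ℝ := fun x => sSup (S ∩ Icc x (cut x)) with hBdef
  have hB : ∀ x ∈ S, B x ∈ S ∧ x ≤ B x ∧ B x ≤ cut x := by
    intro x hx
    have hne : (S ∩ Icc x (cut x)).Nonempty := ⟨x, hx, le_refl x, (hcutgt x).le⟩
    have hcl : IsClosed (S ∩ Icc x (cut x)) := hScl.inter isClosed_Icc
    have hbdd : BddAbove (S ∩ Icc x (cut x)) :=
      (bddAbove_Icc).mono inter_subset_right
    have hmem := hcl.csSup_mem hne hbdd
    exact ⟨hmem.1, hmem.2.1, hmem.2.2⟩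
  have hBgap : ∀ x ∈ S, ∀ y ∈ S, B x < y → cut x < y := by
    intro x hx y hy hby
    by_contra h
    push_neg at h
    have hxy : x ≤ y := le_trans (hB x hx).2.1 hby.le
    have : y ≤ B x := le_csSup ((bddAbove_Icc).mono inter_subset_right)
      ⟨hy, hxy, h⟩
    linarith
  -- next point of S
  set nx : ℝ → ℝ := fun x => sInf (S ∩ Ici (cut x)) with hnxdef
  have hnx : ∀ x : ℝ, (S ∩ Ici (cut x)).Nonempty → nx x ∈ S ∧ cut x < nx x := by
    intro x hne
    have hcl : IsClosed (S ∩ Ici (cut x)) := hScl.inter isClosed_Ici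
    have hbdd : BddBelow (S ∩ Ici (cut x)) := (bddBelow_Ici).mono inter_subset_right
    have hmem := hcl.csInf_mem hne hbdd
    refine ⟨hmem.1, lt_of_le_of_ne hmem.2 ?_⟩
    intro h
    exact hcut3 x (h ▸ hmem.1)
  set X : ℕ → ℝ := fun n => nx^[n] 0 with hXdef
  have hX0 : X 0 = 0 := rfl
  have hXsucc : ∀ n, X (n + 1) = nx (X n) := fun n =>
    Function.iterate_succ_apply' nx n 0
  set P : ℕ → Prop := fun n => (q : ℝ) < cut (X n) ∨ ¬(S ∩ Ici (cut (X n))).Nonempty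
    with hPdef
  have hXinv : ∀ n, (∀ m < n, ¬P m) → X n ∈ S ∧ (n : ℝ) * (δ / 2) ≤ X n := by
    intro n
    induction n with
    | zero => intro _; exact ⟨hX0 ▸ hS0, by simp [hX0]⟩
    | succ n ih =>
      intro h
      have hn : ¬P n := h n (Nat.lt_succ_self n)
      have hne : (S ∩ Ici (cut (X n))).Nonempty := by
        by_contra hc; exact hn (Or.inr hc)
      obtain ⟨hXS, hXge⟩ := ih (fun m hm => h m (hm.trans (Nat.lt_succ_self n)))
      have h1 := hnx (X n) hne
      rw [hXsucc]
      refine ⟨h1.1, ?_⟩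
      have := hcut1 (X n)
      push_cast
      linarith [h1.2]
  have hexistsP : ∃ n, P n := by
    by_contra h
    push_neg at h
    obtain ⟨n, hn⟩ := exists_nat_gt ((q : ℝ) / (δ / 2))
    have hq : (q : ℝ) < (n : ℝ) * (δ / 2) := by
      rw [div_lt_iff₀ (by linarith)] at hn; linarith
    obtain ⟨hXS, hXge⟩ := hXinv n (fun m _ => h m)
    have : (q : ℝ) < cut (X n) := lt_of_lt_of_le hq (le_trans hXge (hcutgt (X n)).le)
    exact h n (Or.inl this)
  set N : ℕ := Nat.find hexistsP with hNdef
  have hPN : P N := Nat.find_spec hexistsP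
  have hmin : ∀ m < N, ¬P m := fun m hm => Nat.find_min hexistsP hm
  have hXS : ∀ n ≤ N, X n ∈ S := fun n hn =>
    (hXinv n (fun m hm => hmin m (lt_of_lt_of_le hm hn))).1
  have hstep : ∀ n < N, cut (X n) < X (n + 1) := by
    intro n hn
    have hne : (S ∩ Ici (cut (X n))).Nonempty := by
      by_contra hc; exact hmin n hn (Or.inr hc)
    rw [hXsucc]; exact (hnx (X n) hne).2
  have hXmono : ∀ m n, m ≤ n → n ≤ N → X m ≤ X n := by
    intro m n hmn hnN
    induction n with
    | zero => simp_all
    | succ n ih =>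
      rcases Nat.lt_succ_iff_lt_or_eq.mp (Nat.lt_succ_of_le hmn) with h | h
      · have h1 : X m ≤ X n := ih (Nat.lt_succ_iff.mp h) (by omega)
        have h2 : X n < X (n + 1) :=
          lt_trans (hcutgt (X n)) (hstep n (by omega))
        linarith
      · exact le_of_eq (by rw [h])
  have hchain : ∀ m n, m < n → n ≤ N → B (X m) < X n := by
    intro m n hmn hnN
    have h1 : B (X m) ≤ cut (X m) := (hB (X m) (hXS m (by omega))).2.2
    have h2 : cut (X m) < X (m + 1) := hstep m (by omega)
    have h3 : X (m + 1) ≤ X n := hXmono (m + 1) n hmn hnN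
    linarith
  -- the final ray
  set a : ℝ := if h : (S ∩ Ici (cut (X N))).Nonempty
      then sInf (S ∩ Ici (cut (X N))) else max (cut (X N)) q + 1 with hadef
  have ha : cut (X N) < a ∧ (q : ℝ) < a ∧ ∀ y ∈ S, B (X N) < y → a ≤ y := by
    by_cases h : (S ∩ Ici (cut (X N))).Nonempty
    · have h1 := hnx (X N) h
      have haval : a = sInf (S ∩ Ici (cut (X N))) := by rw [hadef, dif_pos h]
      have hqc : (q : ℝ) < cut (X N) := by
        rcases hPN with h' | h'
        · exact h'
        · exact absurd h h'
      refine ⟨haval ▸ h1.2, lt_trans hqc (haval ▸ h1.2), ?_⟩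
      intro y hy hby
      have : cut (X N) < y := hBgap (X N) (hXS N le_rfl) y hy hby
      rw [haval]
      exact csInf_le ((bddBelow_Ici).mono inter_subset_right) ⟨hy, this.le⟩
    · have haval : a = max (cut (X N)) q + 1 := by rw [hadef, dif_neg h]
      refine ⟨haval ▸ by simp [lt_of_le_of_lt (le_max_left _ _) (lt_add_one _)], ?_, ?_⟩
      · rw [haval]; exact lt_of_le_of_lt (le_max_right _ _) (lt_add_one _)
      · intro y hy hby
        have : cut (X N) < y := hBgap (X N) (hXS N le_rfl) y hy hby
        exact absurd ⟨hy, this.le⟩ (fun hc => h ⟨y, hc⟩)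
  have hBa : ∀ n ≤ N, B (X n) < a := by
    intro n hn
    rcases lt_or_eq_of_le hn with h | h
    · have h1 : B (X n) < X N := hchain n N h le_rfl
      have h2 : X N ≤ cut (X N) := (hcutgt (X N)).le
      linarith [ha.1]
    · rw [h]
      exact lt_of_le_of_lt (hB (X N) (hXS N le_rfl)).2.2 ha.1
  -- the intervals
  set I : Fin (N + 2) → Set ℝ := fun j =>
    if (j : ℕ) ≤ N then Icc (X j) (B (X j)) else Ici a with hIdef
  set A : Set ℝ := ⋃ j, I j with hAdef
  have hIcc : ∀ j : Fin (N + 2), (j : ℕ) ≤ N → I j = Icc (X j) (B (X j)) := by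
    intro j hj; simp only [hIdef, if_pos hj]
  have hIlast : ∀ j : Fin (N + 2), ¬((j : ℕ) ≤ N) → I j = Ici a := by
    intro j hj; simp only [hIdef, if_neg hj]
  have hXpos : ∀ n ≤ N, (0 : ℝ) ≤ X n := fun n hn => hSsub (hXS n hn)
  -- coverage
  have hcover : S ⊆ A := by
    intro y hy
    by_cases hya : a ≤ y
    · refine mem_iUnion.mpr ⟨Fin.last (N + 1), ?_⟩
      rw [hIlast (Fin.last (N + 1)) (by simp [Fin.last])]
      exact hya
    · push_neg at hya
      set n : ℕ := Nat.findGreatest (fun m => X m ≤ y) N with hndef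
      have hnN : n ≤ N := Nat.findGreatest_le N
      have hXny : X n ≤ y :=
        Nat.findGreatest_spec (P := fun m => X m ≤ y) (Nat.zero_le N)
          (show X 0 ≤ y by rw [hX0]; exact hSsub hy)
      have hyB : y ≤ B (X n) := by
        by_contra hc
        push_neg at hc
        rcases lt_or_eq_of_le hnN with h | h
        · have hcy : cut (X n) < y := hBgap (X n) (hXS n hnN) y hy hc
          have hne : (S ∩ Ici (cut (X n))).Nonempty := ⟨y, hy, hcy.le⟩
          have : X (n + 1) ≤ y := by
            rw [hXsucc]
            exact csInf_le ((bddBelow_Ici).mono inter_subset_right) ⟨hy, hcy.le⟩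
          exact Nat.findGreatest_is_greatest (Nat.lt_succ_self n) (by omega) this
        · have : a ≤ y := ha.2.2 y hy (h ▸ hc)
          linarith
      refine mem_iUnion.mpr ⟨⟨n, by omega⟩, ?_⟩
      rw [hIcc ⟨n, by omega⟩ (by simpa using hnN)]
      exact ⟨hXny, hyB⟩
  refine ⟨A, ⟨?_, ?_, N + 1, I, rfl, ?_, ?_, ?_, ?_⟩, hcover, ?_⟩
  · -- closed
    apply isClosed_iUnion_of_finite
    intro j
    by_cases hj : (j : ℕ) ≤ N
    · rw [hIcc j hj]; exact isClosed_Icc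
    · rw [hIlast j hj]; exact isClosed_Ici
  · -- ⊆ Ici 0
    intro y hy
    obtain ⟨j, hj⟩ := mem_iUnion.mp hy
    by_cases h : (j : ℕ) ≤ N
    · rw [hIcc j h] at hj
      exact le_trans (hXpos j h) hj.1
    · rw [hIlast j h] at hj
      have : (0 : ℝ) ≤ a := le_trans (Nat.cast_nonneg q) ha.2.1.le
      exact le_trans this hj
  · -- 0 ∈ I 0
    have h0 : ((0 : Fin (N + 2)) : ℕ) ≤ N := by simp
    rw [hIcc 0 h0]
    have : X ((0 : Fin (N + 2)) : ℕ) = 0 := by simp [hX0]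
    rw [this]
    exact ⟨le_refl 0, hX0 ▸ (hB 0 hS0).2.1⟩
  · -- compact intervals
    intro i hi
    have hiN : (i : ℕ) ≤ N := by omega
    refine ⟨X i, B (X i), (hB (X i) (hXS i hiN)).2.1, hIcc i hiN, ?_⟩
    have h1 : B (X i) ≤ cut (X i) := (hB (X i) (hXS i hiN)).2.2
    have h2 : cut (X i) < X i + δ := hcut2 (X i)
    have : δ < (2 : ℝ) ^ (-(q : ℤ)) := by
      rw [hδdef]; linarith [hδpos]
    linarith
  · -- last interval
    refine ⟨a, ?_, ha.2.1⟩
    apply hIlast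
    simp [Fin.last]
  · -- pairwise disjoint
    have key : ∀ i j : Fin (N + 2), (i : ℕ) < (j : ℕ) → Disjoint (I i) (I j) := by
      intro i j hij
      have hiN : (i : ℕ) ≤ N := by omega
      rw [Set.disjoint_left]
      intro y hyi hyj
      rw [hIcc i hiN] at hyi
      by_cases hj : (j : ℕ) ≤ N
      · rw [hIcc j hj] at hyj
        have : B (X i) < X j := hchain i j hij hj
        have h1 : y ≤ B (X i) := hyi.2
        have h2 : X (j : ℕ) ≤ y := hyj.1
        linarith
      · rw [hIlast j hj] at hyj
        have : B (X i) < a := hBa i hiN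
        have h1 : y ≤ B (X i) := hyi.2
        have h2 : a ≤ y := hyj
        linarith
    intro i j hij
    rcases lt_trichotomy (i : ℕ) (j : ℕ) with h | h | h
    · exact key i j h
    · exact absurd (Fin.ext h) hij
    · exact (key j i h).symm
  · -- components
    intro y hy hcomp
    obtain ⟨j, hj⟩ := mem_iUnion.mp hy
    by_cases h : (j : ℕ) ≤ N
    · rw [hIcc j h] at hj
      have hsub : Icc (X j) (B (X j)) ⊆ connectedComponentIn A y :=
        isPreconnected_Icc.subset_connectedComponentIn hj
          (by rw [← hIcc j h]; exact subset_iUnion I j)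
      refine ⟨X j, hsub ⟨le_refl _, (hB (X j) (hXS j h)).2.1⟩, hXS j h⟩
    · rw [hIlast j h] at hj
      exfalso
      have hsub : Ici a ⊆ connectedComponentIn A y :=
        isPreconnected_Ici.subset_connectedComponentIn hj
          (by rw [← hIlast j h]; exact subset_iUnion I j)
      exact not_bddAbove_Ici a (hcomp.bddAbove.mono hsub)
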